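/- Let Y ∈ {0,1}^{n×n} be any matrix satisfying Y_{ji} = 1 − Y_{ij} for all i ≠ j. Then every least squares estimate M̂_LS ∈ argmin over M ∈ C_SST of ‖Y − M‖²_F satisfies ‖(1/2)·11ᵀ − M̂_LS‖²_F ≥ (n − 1)/4. -/

import Mathlib

open MeasureTheory ENNReal

noncomputable section

namespace SSTPaper

/-- Squared Frobenius norm of an `n × n` real matrix (as a function). -/
def frobSq {n : ℕ} (A : Fin n → Fin n → ℝ) : ℝ := ∑ i, ∑ j, (A i j) ^ 2

/-- Trace inner product `⟨A, B⟩ = trace (Aᵀ B)`. -/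
def tinner {n : ℕ} (A B : Fin n → Fin n → ℝ) : ℝ := ∑ i, ∑ j, A i j * B i j

/-- The SST class: shifted-skew-symmetric matrices with entries in `[0,1]` that are
`π`-SST for some permutation `π` (where `π` ranks `i` above `j` iff `π j < π i`). -/
def sstClass (n : ℕ) : Set (Fin n → Fin n → ℝ) :=
  {M | (∀ i j, 0 ≤ M i j ∧ M i j ≤ 1) ∧ (∀ i j, M j i = 1 - M i j) ∧
    ∃ π : Equiv.Perm (Fin n), ∀ i j k : Fin n, π j < π i → M j k ≤ M i k}

/-- The set of SST matrices faithful to a given permutation `π`. -/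
def sstOf {n : ℕ} (π : Equiv.Perm (Fin n)) : Set (Fin n → Fin n → ℝ) :=
  {M | (∀ i j, 0 ≤ M i j ∧ M i j ≤ 1) ∧ (∀ i j, M j i = 1 - M i j) ∧
    ∀ i j k : Fin n, π j < π i → M j k ≤ M i k}

/-- Size of the largest indifference set of `M`: the maximal number of identical rows. -/
def kmaxM {n : ℕ} (M : Fin n → Fin n → ℝ) : ℕ :=
  Finset.univ.sup fun i => Set.ncard {j : Fin n | M j = M i}

/-- Number of indifference sets of `M`: the number of distinct rows. -/
def numSets {n : ℕ} (M : Fin n → Fin n → ℝ) : ℕ := Set.ncard (Set.range M)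

/-- SST matrices having an indifference set of size at least `k`. -/
def sstClassK (n k : ℕ) : Set (Fin n → Fin n → ℝ) :=
  {M | M ∈ sstClass n ∧ k ≤ kmaxM M}

/-- SST matrices that respect some indifference-set partition of sizes `k`. -/
def sstClassPart (n s : ℕ) (k : Fin s → ℕ) : Set (Fin n → Fin n → ℝ) :=
  {M | M ∈ sstClass n ∧ ∃ P : Fin s → Finset (Fin n),
    (∀ a b, a ≠ b → Disjoint (P a) (P b)) ∧ (∀ a, (P a).card = k a) ∧
    (∀ i : Fin n, ∃ a, i ∈ P a) ∧
    ∀ a b : Fin s, ∀ i ∈ P a, ∀ i' ∈ P a, ∀ j ∈ P b, ∀ j' ∈ P b, M i j = M i' j'}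

/-- Bernoulli measure on `Bool` with success probability `p`. -/
def bern (p : ℝ) : Measure Bool :=
  (ENNReal.ofReal p) • Measure.dirac true + (ENNReal.ofReal (1 - p)) • Measure.dirac false

/-- The law of the observation matrix `Y`: entries on and above the diagonal independent,
`P[Y i j = 1] = M i j` for `i < j`, `Y j i = 1 - Y i j` off the diagonal, and fair coin
on the diagonal. -/
def obsMeasure {n : ℕ} (M : Fin n → Fin n → ℝ) : Measure (Fin n → Fin n → ℝ) :=
  Measure.map (fun (ω : Fin n × Fin n → Bool) (i j : Fin n) =>
      if i < j then (if ω (i, j) then (1 : ℝ) else 0)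
      else if j < i then 1 - (if ω (j, i) then (1 : ℝ) else 0)
      else (if ω (i, j) then (1 : ℝ) else 0))
    (Measure.pi fun p : Fin n × Fin n => bern (if p.1 = p.2 then 1 / 2 else M p.1 p.2))

/-- The risk `E ‖M̂(Y) − M*‖²_F` of an estimator. -/
def risk {n : ℕ} (Mhat : (Fin n → Fin n → ℝ) → Fin n → Fin n → ℝ)
    (Mstar : Fin n → Fin n → ℝ) : ℝ≥0∞ :=
  ∫⁻ Y, ENNReal.ofReal (frobSq (Mhat Y - Mstar)) ∂(obsMeasure Mstar)

/-- The `(s, k)`-oracle risk. -/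
def oracleRisk (n s : ℕ) (k : Fin s → ℕ) : ℝ≥0∞ :=
  ⨅ (Mhat : (Fin n → Fin n → ℝ) → Fin n → Fin n → ℝ) (_ : Measurable Mhat),
    ⨆ (Mstar : Fin n → Fin n → ℝ) (_ : Mstar ∈ sstClassPart n s k), risk Mhat Mstar

/-- The global adaptivity index of an estimator. -/
def adaptIndex {n : ℕ} (Mhat : (Fin n → Fin n → ℝ) → Fin n → Fin n → ℝ) : ℝ≥0∞ :=
  ⨆ (s : ℕ) (k : Fin s → ℕ) (_ : ∀ a, 1 ≤ k a) (_ : ∑ a, k a = n) (_ : ∀ a, k a < n),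
    (⨆ (Mstar : Fin n → Fin n → ℝ) (_ : Mstar ∈ sstClassPart n s k), risk Mhat Mstar) /
      oracleRisk n s k

/-- Number of wins of item `i`. -/
def winCount {n : ℕ} (Y : Fin n → Fin n → ℝ) (i : Fin n) : ℝ := ∑ j, Y i j

instance {n : ℕ} : MeasurableSpace (Equiv.Perm (Fin n)) := ⊤

/-- Uniform measure on a (finite) set. -/
def unifOn {α : Type*} [Fintype α] [MeasurableSpace α] (s : Set α) : Measure α :=
  (s.ncard : ℝ≥0∞)⁻¹ • ∑ a ∈ (Set.toFinite s).toFinset, Measure.dirac a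

set_option maxHeartbeats 1000000 in
/-- for any binary skew observation matrix `Y`, every least squares estimate
over `C_SST` satisfies `‖½·11ᵀ − M̂_LS‖²_F ≥ (n − 1)/4`. -/
theorem ls_far_from_half {n : ℕ} (hn : 2 ≤ n)
    (Y : Fin n → Fin n → ℝ)
    (hY01 : ∀ i j, Y i j = 0 ∨ Y i j = 1)
    (hYskew : ∀ i j : Fin n, i ≠ j → Y j i = 1 - Y i j)
    (Mls : Fin n → Fin n → ℝ)
    (hmem : Mls ∈ sstClass n)
    (hmin : ∀ M ∈ sstClass n, frobSq (Y - Mls) ≤ frobSq (Y - M)) :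
    ((n : ℝ) - 1) / 4 ≤ frobSq ((fun _ _ => (1 : ℝ) / 2) - Mls) := by
  classical
  obtain ⟨hbnd, hskew, π, hsst⟩ := hmem
  have hn0 : 0 < n := by omega
  have hne : Nonempty (Fin n) := ⟨⟨0, hn0⟩⟩
  set i0 : Fin n := ⟨0, hn0⟩ with hi0
  have hdiag : ∀ i, Mls i i = 1 / 2 := fun i => by have := hskew i i; linarith
  have hY0 : ∀ i j, (0 : ℝ) ≤ Y i j := fun i j => by
    rcases hY01 i j with h | h <;> rw [h] <;> norm_num
  have hY1 : ∀ i j, Y i j ≤ 1 := fun i j => by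
    rcases hY01 i j with h | h <;> rw [h] <;> norm_num
  -- ε : minimal distance of non-one entries to 1
  set s : Finset (Fin n × Fin n) :=
    Finset.univ.filter (fun p : Fin n × Fin n => Mls p.1 p.2 < 1) with hs_def
  have hs : s.Nonempty := ⟨(i0, i0), by
    simp only [hs_def, Finset.mem_filter, Finset.mem_univ, true_and]
    rw [hdiag i0]; norm_num⟩
  set ε : ℝ := s.inf' hs (fun p => 1 - Mls p.1 p.2) with hε_def
  have hεpos : 0 < ε := by
    rw [hε_def, Finset.lt_inf'_iff]
    intro p hp
    simp only [hs_def, Finset.mem_filter, Finset.mem_univ, true_and] at hp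
    linarith
  have hεle : ∀ i j, Mls i j < 1 → ε ≤ 1 - Mls i j := by
    intro i j h
    have hm : (i, j) ∈ s := by
      simp only [hs_def, Finset.mem_filter, Finset.mem_univ, true_and]
      exact h
    exact Finset.inf'_le _ hm
  have hεleM : ∀ i j, 0 < Mls i j → ε ≤ Mls i j := by
    intro i j h
    have hsk := hskew i j
    have h2 : Mls j i < 1 := by linarith
    have := hεle j i h2
    linarith
  clear_value ε
  -- the stretched comparator T
  set T : Fin n → Fin n → ℝ := fun i j =>
    if Mls i j = 1 then 1 else if Mls i j = 0 then 0
    else Mls i j + ε * (Mls i j - 1 / 2) with hT_def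
  have hT01 : ∀ i j, 0 ≤ T i j ∧ T i j ≤ 1 := by
    intro i j
    by_cases h1 : Mls i j = 1
    · simp only [hT_def, if_pos h1]; norm_num
    by_cases h0 : Mls i j = 0
    · simp only [hT_def, if_neg h1, if_pos h0]; norm_num
    obtain ⟨hb0, hb1⟩ := hbnd i j
    have hlt1 : Mls i j < 1 := lt_of_le_of_ne hb1 h1
    have hgt0 : 0 < Mls i j := lt_of_le_of_ne hb0 (Ne.symm h0)
    have e1 := hεle i j hlt1
    have e2 := hεleM i j hgt0
    simp only [hT_def, if_neg h1, if_neg h0]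
    rcases le_or_gt (1 / 2) (Mls i j) with hM | hM
    · constructor
      · nlinarith [mul_nonneg hεpos.le (by linarith : (0:ℝ) ≤ Mls i j - 1 / 2)]
      · nlinarith [mul_le_mul_of_nonneg_right e1
          (by linarith : (0:ℝ) ≤ Mls i j - 1 / 2),
          mul_nonneg (by linarith : (0:ℝ) ≤ 1 - Mls i j)
          (by linarith : (0:ℝ) ≤ 1 - (Mls i j - 1 / 2))]
    · constructor
      · nlinarith [mul_le_mul_of_nonneg_right e2
          (by linarith : (0:ℝ) ≤ 1 / 2 - Mls i j),
          mul_nonneg hgt0.le (by linarith : (0:ℝ) ≤ 1 / 2 + Mls i j)]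
      · nlinarith [mul_nonneg hεpos.le (by linarith : (0:ℝ) ≤ 1 / 2 - Mls i j)]
  have hTskew : ∀ i j, T j i = 1 - T i j := by
    intro i j
    have hsk := hskew i j
    by_cases h1 : Mls i j = 1
    · have hji : Mls j i = 0 := by rw [hsk, h1]; ring
      have hji1 : Mls j i ≠ 1 := by rw [hji]; norm_num
      simp only [hT_def, if_pos h1, if_neg hji1, if_pos hji]; norm_num
    by_cases h0 : Mls i j = 0
    · have hji : Mls j i = 1 := by rw [hsk, h0]; ring
      simp only [hT_def, if_pos hji, if_neg h1, if_pos h0]; norm_num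
    · have hji1 : Mls j i ≠ 1 := by intro h; apply h0; linarith
      have hji0 : Mls j i ≠ 0 := by intro h; apply h1; linarith
      simp only [hT_def, if_neg h1, if_neg h0, if_neg hji1, if_neg hji0]
      rw [hsk]; ring
  have hTmono : ∀ i j k, Mls j k ≤ Mls i k → T j k ≤ T i k := by
    intro i j k h
    by_cases hjk1 : Mls j k = 1
    · have hik1 : Mls i k = 1 := le_antisymm (hbnd i k).2 (hjk1 ▸ h)
      have e1 : T j k = 1 := by simp only [hT_def, if_pos hjk1]
      have e2 : T i k = 1 := by simp only [hT_def, if_pos hik1]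
      rw [e1, e2]
    by_cases hjk0 : Mls j k = 0
    · have hTjk : T j k = 0 := by simp only [hT_def, if_neg hjk1, if_pos hjk0]
      rw [hTjk]; exact (hT01 i k).1
    by_cases hik1 : Mls i k = 1
    · have hTik : T i k = 1 := by simp only [hT_def, if_pos hik1]
      rw [hTik]; exact (hT01 j k).2
    · have hik0 : Mls i k ≠ 0 := by
        intro h0; apply hjk0
        have hb := (hbnd j k).1
        rw [h0] at h; linarith
      simp only [hT_def, if_neg hjk1, if_neg hjk0, if_neg hik1, if_neg hik0]
      nlinarith [mul_le_mul_of_nonneg_left h hεpos.le]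
  have hTptw : ∀ i j, ε * ((Y i j - Mls i j) * (Mls i j - 1 / 2))
      ≤ (Y i j - Mls i j) * (T i j - Mls i j) := by
    intro i j
    by_cases h1 : Mls i j = 1
    · have hT1 : T i j = 1 := by simp only [hT_def, if_pos h1]
      rw [hT1, h1]
      have hy := hY1 i j
      nlinarith [mul_nonneg hεpos.le (by linarith : (0:ℝ) ≤ 1 - Y i j)]
    by_cases h0 : Mls i j = 0
    · have hT0 : T i j = 0 := by simp only [hT_def, if_neg h1, if_pos h0]
      rw [hT0, h0]
      have hy := hY0 i j
      nlinarith [mul_nonneg hεpos.le (hY0 i j)]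
    · have hTe : T i j = Mls i j + ε * (Mls i j - 1 / 2) := by
        simp only [hT_def, if_neg h1, if_neg h0]
      rw [hTe]
      apply le_of_eq; ring
  clear_value T
  -- inner-product optimality
  set A : ℝ := ∑ i, ∑ j, (Y i j - Mls i j) * (T i j - Mls i j) with hA_def
  set B : ℝ := ∑ i, ∑ j, (T i j - Mls i j) ^ 2 with hB_def
  have hB0 : 0 ≤ B := by
    rw [hB_def]
    exact Finset.sum_nonneg fun i _ => Finset.sum_nonneg fun j _ => sq_nonneg _
  clear_value A B
  have hkey : ∀ t : ℝ, 0 ≤ t → t ≤ 1 → 2 * t * A ≤ t ^ 2 * B := by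
    intro t ht0 ht1
    set Mt : Fin n → Fin n → ℝ :=
      fun i j => Mls i j + t * (T i j - Mls i j) with hMt_def
    have hmem' : Mt ∈ sstClass n := by
      refine ⟨fun i j => ?_, fun i j => ?_, π, fun i j k hlt => ?_⟩
      · obtain ⟨a0, a1⟩ := hbnd i j
        obtain ⟨b0, b1⟩ := hT01 i j
        constructor <;> simp only [hMt_def] <;> nlinarith
      · have h1 := hskew i j
        have h2 := hTskew i j
        simp only [hMt_def]; rw [h1, h2]; ring
      · have h1 := hsst i j k hlt
        have h2 := hTmono i j k h1
        simp only [hMt_def]; nlinarith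
    have hle := hmin Mt hmem'
    have hexp : frobSq (Y - Mt) = frobSq (Y - Mls) - 2 * t * A + t ^ 2 * B := by
      simp only [frobSq, hA_def, hB_def]
      rw [Finset.mul_sum, Finset.mul_sum, ← Finset.sum_sub_distrib,
        ← Finset.sum_add_distrib]
      refine Finset.sum_congr rfl fun i _ => ?_
      rw [Finset.mul_sum, Finset.mul_sum, ← Finset.sum_sub_distrib,
        ← Finset.sum_add_distrib]
      refine Finset.sum_congr rfl fun j _ => ?_
      simp only [Pi.sub_apply, hMt_def]; ring
    rw [hexp] at hle; linarith
  have hA : A ≤ 0 := by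
    by_contra hcon
    push_neg at hcon
    rcases le_or_gt B A with hBA | hAB
    · have := hkey 1 zero_le_one le_rfl
      nlinarith
    · have hBpos : 0 < B := lt_trans hcon hAB
      have ht1 : A / B ≤ 1 := by
        rw [div_le_one hBpos]; exact hAB.le
      have hk := hkey (A / B) (le_of_lt (div_pos hcon hBpos)) ht1
      have h2 : 2 * (A / B) * A = 2 * (A ^ 2 / B) := by ring
      have h3 : (A / B) ^ 2 * B = A ^ 2 / B := by
        field_simp
      rw [h2, h3] at hk
      have h5 : 0 < A ^ 2 / B := div_pos (by positivity) hBpos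
      linarith
  -- P ≤ SM
  set SM : ℝ := ∑ i, ∑ j, (Mls i j - 1 / 2) ^ 2 with hSM_def
  set P : ℝ := ∑ i, ∑ j, (Y i j - 1 / 2) * (Mls i j - 1 / 2) with hP_def
  clear_value SM P
  have hPSM : P ≤ SM := by
    have hCA : ε * (P - SM) ≤ A := by
      have hps : ε * (P - SM)
          = ∑ i, ∑ j, ε * ((Y i j - Mls i j) * (Mls i j - 1 / 2)) := by
        rw [hP_def, hSM_def, ← Finset.sum_sub_distrib, Finset.mul_sum]
        refine Finset.sum_congr rfl fun i _ => ?_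
        rw [← Finset.sum_sub_distrib, Finset.mul_sum]
        exact Finset.sum_congr rfl fun j _ => by ring
      rw [hps, hA_def]
      exact Finset.sum_le_sum fun i _ => Finset.sum_le_sum fun j _ => hTptw i j
    by_contra hPS
    push_neg at hPS
    have hp2 : 0 < ε * (P - SM) := mul_pos hεpos (by linarith)
    linarith
  -- win counts
  set d : Fin n → Fin n → ℝ := fun i j => if i = j then 0 else Y i j with hd_def
  set Wf : Fin n → ℝ := fun i => ∑ j, d i j with hWf_def
  have hdsum : (∑ i, Wf i) * 2 = (n : ℝ) ^ 2 - n := by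
    have hswap : ∑ i, ∑ j, d i j = ∑ i, ∑ j, d j i := Finset.sum_comm
    calc (∑ i, Wf i) * 2
        = (∑ i, ∑ j, d i j) + (∑ i, ∑ j, d j i) := by
          simp only [hWf_def]; rw [← hswap]; ring
      _ = ∑ i, ∑ j, (d i j + d j i) := by
          rw [← Finset.sum_add_distrib]
          exact Finset.sum_congr rfl fun i _ => Finset.sum_add_distrib.symm
      _ = ∑ i, ∑ j, (if i = j then (0:ℝ) else 1) := by
          refine Finset.sum_congr rfl fun i _ => Finset.sum_congr rfl fun j _ => ?_
          by_cases h : i = j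
          · simp [hd_def, h]
          · have hsk := hYskew i j h
            simp only [hd_def, if_neg h, if_neg (Ne.symm h)]
            linarith
      _ = ∑ _i : Fin n, ((n:ℝ) - 1) := by
          refine Finset.sum_congr rfl fun i _ => ?_
          have hpt : ∀ j, (if i = j then (0:ℝ) else 1)
              = 1 - (if i = j then (1:ℝ) else 0) := fun j => by split_ifs <;> ring
          rw [Finset.sum_congr rfl fun j _ => hpt j, Finset.sum_sub_distrib,
            Finset.sum_ite_eq]
          simp
      _ = (n:ℝ)^2 - n := by
          rw [Finset.sum_const, Finset.card_univ, Fintype.card_fin, nsmul_eq_mul]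
          ring
  have hex : ∃ a, ((n:ℝ) - 1) / 2 ≤ Wf a := by
    by_contra hcon
    push_neg at hcon
    have hlt : ∑ i, Wf i < ∑ _i : Fin n, ((n:ℝ) - 1) / 2 :=
      Finset.sum_lt_sum_of_nonempty Finset.univ_nonempty fun i _ => hcon i
    rw [Finset.sum_const, Finset.card_univ, Fintype.card_fin, nsmul_eq_mul] at hlt
    nlinarith
  obtain ⟨a, ha⟩ := hex
  -- the witness matrix
  set Tw : Fin n → Fin n → ℝ := fun i j =>
    if i = j then 1/2
    else if i = a then (if Y a j = 1 then 1 else 1/2)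
    else if j = a then (if Y a i = 1 then 0 else 1/2)
    else 1/2 with hTw_def
  have hrow : ∀ i k, i ≠ a → Tw i k = if (k = a ∧ Y a i = 1) then 0 else 1/2 := by
    intro i k hia
    by_cases hik : i = k
    · have hka : ¬(k = a ∧ Y a i = 1) := fun h => hia (hik.trans h.1)
      simp only [hTw_def, if_pos hik, if_neg hka]
    · by_cases hka : k = a
      · simp only [hTw_def, if_neg hik, if_neg hia, if_pos hka, hka, true_and, if_true]
      · have hka' : ¬(k = a ∧ Y a i = 1) := fun h => hka h.1
        simp only [hTw_def, if_neg hik, if_neg hia, if_neg hka, if_neg hka']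
  have haup : ∀ k, 1/2 ≤ Tw a k := by
    intro k
    by_cases hk : a = k
    · simp only [hTw_def, if_pos hk]
      exact le_rfl
    · simp only [hTw_def, if_neg hk, if_pos rfl]
      split_ifs <;> norm_num
  have hTw_mem : Tw ∈ sstClass n := by
    set ρ : Fin n → ℕ := fun x => if x = a then 2 else if Y a x = 1 then 0 else 1
      with hρ_def
    refine ⟨fun i j => ?_, fun i j => ?_, (Tuple.sort ρ)⁻¹, fun i j k hlt => ?_⟩
    · simp only [hTw_def]
      split_ifs <;> norm_num
    · by_cases hij : i = j
      · simp only [hTw_def, if_pos hij, if_pos (hij.symm)]; norm_num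
      · by_cases hia : i = a
        · by_cases hja : j = a
          · exact absurd (hia.trans hja.symm) hij
          · simp only [hTw_def, if_neg (show ¬(j = i) from fun h => hij h.symm), if_neg hij,
              if_neg hja, if_pos hia]
            split_ifs <;> norm_num
        · by_cases hja : j = a
          · simp only [hTw_def, if_neg (show ¬(j = i) from fun h => hij h.symm), if_neg hij,
              if_pos hja, if_neg hia]
            split_ifs <;> norm_num
          · simp only [hTw_def, if_neg (show ¬(j = i) from fun h => hij h.symm), if_neg hij,
              if_neg hja, if_neg hia]
            norm_num
    · have hρle : ρ j ≤ ρ i := by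
        have hm := Tuple.monotone_sort ρ (le_of_lt hlt)
        simpa using hm
      by_cases hia : i = a
      · by_cases hja : j = a
        · have hij : i = j := hia.trans hja.symm
          rw [hij]
        · have h1 : Tw j k ≤ 1/2 := by
            rw [hrow j k hja]; split_ifs <;> norm_num
          have h2 : (1:ℝ)/2 ≤ Tw i k := by rw [hia]; exact haup k
          exact h1.trans h2
      · have hja : j ≠ a := by
          intro hja'
          have h2 : ρ j = 2 := by simp [hρ_def, hja']
          have h1 : ρ i ≤ 1 := by
            simp only [hρ_def, if_neg hia]
            split_ifs <;> omega
          omega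
        rw [hrow i k hia, hrow j k hja]
        by_cases hc : k = a ∧ Y a i = 1
        · have hρi : ρ i = 0 := by simp [hρ_def, hia, hc.2]
          have hρj0 : ρ j = 0 := by omega
          have hYaj : Y a j = 1 := by
            by_contra hny
            have : ρ j = 1 := by simp [hρ_def, hja, hny]
            omega
          rw [if_pos hc, if_pos ⟨hc.1, hYaj⟩]
        · rw [if_neg hc]
          split_ifs <;> norm_num
  -- value of the witness
  have hq : ∀ i j, (Y i j - Tw i j)^2
      = 1/4 - ((if i = a then d a j else 0) + (if j = a then d a i else 0))/4 := by
    intro i j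
    by_cases hij : i = j
    · have hTwij : Tw i j = 1/2 := by simp only [hTw_def, if_pos hij]
      have he1 : (if i = a then d a j else 0) = 0 := by
        split_ifs with h
        · rw [hd_def]; simp [← hij, h]
        · rfl
      have he2 : (if j = a then d a i else 0) = 0 := by
        split_ifs with h
        · rw [hd_def]; simp [hij, h]
        · rfl
      rw [hTwij, he1, he2]
      rcases hY01 i j with h | h <;> rw [h] <;> norm_num
    · by_cases hia : i = a
      · have hja : j ≠ a := fun h => hij (hia.trans h.symm)
        have haj : a ≠ j := fun h => hja h.symm
        have hd1 : d a j = Y a j := by simp [hd_def, haj]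
        have hTwv : Tw i j = if Y a j = 1 then 1 else 1/2 := by
          simp only [hTw_def, if_neg hij, if_pos hia]
        rw [hTwv, if_pos hia, if_neg hja, hd1, hia]
        rcases hY01 a j with h | h <;> rw [h] <;> norm_num
      · by_cases hja : j = a
        · have hai : a ≠ i := fun h => hia h.symm
          have hd1 : d a i = Y a i := by simp [hd_def, hai]
          have hYia : Y i j = 1 - Y a i := by rw [hja]; exact hYskew a i hai
          have hTwv : Tw i j = if Y a i = 1 then 0 else 1/2 := by
            rw [hrow i j hia, hja]; simp
          rw [hTwv, if_neg hia, if_pos hja, hd1, hYia]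
          rcases hY01 a i with h | h <;> rw [h] <;> norm_num
        · have hTwv : Tw i j = 1/2 := by
            rw [hrow i j hia]
            exact if_neg (fun h => hja h.1)
          rw [hTwv, if_neg hia, if_neg hja]
          rcases hY01 i j with h | h <;> rw [h] <;> norm_num
  have hfrobTw : frobSq (Y - Tw) = (n:ℝ)^2/4 - Wf a / 2 := by
    have inner : ∀ i : Fin n, ∑ j, ((Y : Fin n → Fin n → ℝ) i j - Tw i j)^2
        = (n:ℝ)/4 - ((if i = a then Wf a else 0) + d a i)/4 := by
      intro i
      rw [Finset.sum_congr rfl fun j _ => hq i j, Finset.sum_sub_distrib]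
      congr 1
      · rw [Finset.sum_const, Finset.card_univ, Fintype.card_fin, nsmul_eq_mul]
        ring
      · rw [← Finset.sum_div]
        congr 1
        rw [Finset.sum_add_distrib]
        congr 1
        · split_ifs with h
          · rw [hWf_def]
          · exact Finset.sum_const_zero
        · rw [Finset.sum_ite_eq']
          simp
    simp only [frobSq, Pi.sub_apply]
    rw [Finset.sum_congr rfl fun i _ => inner i, Finset.sum_sub_distrib,
      Finset.sum_const, Finset.card_univ, Fintype.card_fin, nsmul_eq_mul,
      ← Finset.sum_div, Finset.sum_add_distrib, Finset.sum_ite_eq']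
    have hwa : ∑ i, d a i = Wf a := rfl
    rw [hwa]
    simp only [Finset.mem_univ, if_pos]
    ring
  -- expansion of the LS objective
  have hYhalf : ∑ i, ∑ j, ((Y : Fin n → Fin n → ℝ) i j - 1/2)^2 = (n:ℝ)^2/4 := by
    have h1 : ∀ i j, ((Y : Fin n → Fin n → ℝ) i j - 1/2)^2 = (1/4 : ℝ) := by
      intro i j; rcases hY01 i j with h | h <;> rw [h] <;> norm_num
    rw [Finset.sum_congr rfl fun i _ => Finset.sum_congr rfl fun j _ => h1 i j]
    rw [Finset.sum_congr rfl fun i (_ : i ∈ Finset.univ) => Finset.sum_const (1/4 : ℝ)]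
    rw [Finset.sum_const, Finset.card_univ, Fintype.card_fin, nsmul_eq_mul,
      nsmul_eq_mul]
    ring
  have hfrobM : frobSq (Y - Mls) = (n:ℝ)^2/4 - 2*P + SM := by
    simp only [frobSq, Pi.sub_apply]
    rw [hP_def, hSM_def, ← hYhalf]
    rw [Finset.mul_sum, ← Finset.sum_sub_distrib, ← Finset.sum_add_distrib]
    refine Finset.sum_congr rfl fun i _ => ?_
    rw [Finset.mul_sum, ← Finset.sum_sub_distrib, ← Finset.sum_add_distrib]
    refine Finset.sum_congr rfl fun j _ => ?_
    ring
  have hgoal : frobSq ((fun _ _ => (1:ℝ)/2) - Mls) = SM := by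
    simp only [frobSq, Pi.sub_apply, hSM_def]
    exact Finset.sum_congr rfl fun i _ => Finset.sum_congr rfl fun j _ => by ring
  rw [hgoal]
  have hmin2 := hmin Tw hTw_mem
  rw [hfrobM, hfrobTw] at hmin2
  linarith

end SSTPaper
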